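/- arXiv:1103.1143 — 2 statements merged into one kernel-verified Lean document; each statement's English description precedes it below -/
import Mathlib

section
/- For every κ > 0: φ_R^* ≥ (C_κ(R, X∖R)/μ(R))·(1 − ε_R^* − κ/γ_R); moreover C_κ(R, X∖R) < κ·μ(R) and φ_R^* ≤ (C_κ(R, X∖R)/μ(R))·(1 − C_κ(R, X∖R)/(κ·μ(R)))^{−2}. -/
open Finset

noncomputable section

/-- Irreducibility of a finite nonnegative matrix: any state reaches any other. -/
def Irred {n : Type*} [Fintype n] [DecidableEq n] (P : Matrix n n ℝ) : Prop :=
  ∀ x y, ∃ k : ℕ, 0 < (P ^ k) x y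

/-- The restricted ensemble `μ_R(x) = μ(x)/μ(R)` (as a function on all of `X`). -/
def muR {X : Type*} [Fintype X] (μ : X → ℝ) (R : Finset X) (x : X) : ℝ :=
  μ x / ∑ y ∈ R, μ y

/-- Escape probability `e_R(x) = Σ_{y∉R} p(x,y)`. -/
def escR {X : Type*} [Fintype X] [DecidableEq X] (p : Matrix X X ℝ) (R : Finset X)
    (x : X) : ℝ := ∑ y ∈ Rᶜ, p x y

/-- The reflected kernel `p_R` on `R`. -/
def pRefl {X : Type*} [Fintype X] [DecidableEq X] (p : Matrix X X ℝ) (R : Finset X) :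
    Matrix R R ℝ :=
  fun x y => if (x : X) = (y : X) then p x x + escR p R x else p x y

/-- The sub-Markovian killed kernel `p_R^*` on `R`. -/
def pKill {X : Type*} [Fintype X] (p : Matrix X X ℝ) (R : Finset X) : Matrix R R ℝ :=
  fun x y => p x y

/-- Mean of `f` with respect to the weight `μ` on a finite type. -/
def meanOf {n : Type*} [Fintype n] (μ : n → ℝ) (f : n → ℝ) : ℝ := ∑ x, μ x * f x

/-- Scalar product `⟨f,g⟩` with respect to the weight `μ` on a finite type. -/
def innOf {n : Type*} [Fintype n] (μ : n → ℝ) (f g : n → ℝ) : ℝ := ∑ x, μ x * f x * g x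

/-- Variance of `f` with respect to the weight `μ` on a finite type. -/
def varOf {n : Type*} [Fintype n] (μ : n → ℝ) (f : n → ℝ) : ℝ :=
  ∑ x, μ x * (f x - meanOf μ f) ^ 2

/-- Dirichlet form of the kernel `P` reversible w.r.t. `μ`. -/
def dirOf {n : Type*} [Fintype n] (P : Matrix n n ℝ) (μ : n → ℝ) (f : n → ℝ) : ℝ :=
  (1 / 2) * ∑ x, ∑ y, μ x * P x y * (f x - f y) ^ 2

/-- Spectral gap of the kernel `P` reversible w.r.t. `μ`:
`min { D(f)/Var_μ(f) : Var_μ(f) ≠ 0 }`. -/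
def gapOf {n : Type*} [Fintype n] (P : Matrix n n ℝ) (μ : n → ℝ) : ℝ :=
  sInf {r : ℝ | ∃ f : n → ℝ, varOf μ f ≠ 0 ∧ r = dirOf P μ f / varOf μ f}

/-- Spectral gap `γ_R` of the reflected process on `R`. -/
def gapR {X : Type*} [Fintype X] [DecidableEq X] (p : Matrix X X ℝ) (μ : X → ℝ)
    (R : Finset X) : ℝ :=
  gapOf (pRefl p R) (fun x : R => muR μ R x)

/-- `(κ,∞)`-capacity `C_κ(R, X∖R)` (Dirichlet principle). -/
def capK {X : Type*} [Fintype X] [DecidableEq X] (p : Matrix X X ℝ) (μ : X → ℝ)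
    (R : Finset X) (κ : ℝ) : ℝ :=
  sInf {r : ℝ | ∃ f : X → ℝ, (∀ x ∉ R, f x = 0) ∧
    r = dirOf p μ f + κ * ∑ a ∈ R, μ a * (f a - 1) ^ 2}

/-- `(∞,λ)`-capacity `C^λ(R, X∖R)` (Dirichlet principle). -/
def capL {X : Type*} [Fintype X] [DecidableEq X] (p : Matrix X X ℝ) (μ : X → ℝ)
    (R : Finset X) (l : ℝ) : ℝ :=
  sInf {r : ℝ | ∃ f : X → ℝ, (∀ x ∈ R, f x = 1) ∧
    r = dirOf p μ f + l * ∑ b ∈ Rᶜ, μ b * f b ^ 2}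

/-- `(κ,λ)`-capacity `C_κ^λ(A, B)` (Dirichlet principle). -/
def capKL {X : Type*} [Fintype X] [DecidableEq X] (p : Matrix X X ℝ) (μ : X → ℝ)
    (A B : Finset X) (κ l : ℝ) : ℝ :=
  sInf {r : ℝ | ∃ f : X → ℝ,
    r = dirOf p μ f + κ * ∑ a ∈ A, μ a * (f a - 1) ^ 2 + l * ∑ b ∈ B, μ b * f b ^ 2}


/-! ### Auxiliary lemmas -/

section Helpers

variable {n : Type*} [Fintype n]

lemma dirOf_nonneg' {P : Matrix n n ℝ} {μ : n → ℝ}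
    (hP : ∀ x y, 0 ≤ P x y) (hμ : ∀ x, 0 ≤ μ x) (f : n → ℝ) : 0 ≤ dirOf P μ f := by
  unfold dirOf
  apply mul_nonneg (by norm_num)
  refine Finset.sum_nonneg fun x _ => Finset.sum_nonneg fun y _ => ?_
  exact mul_nonneg (mul_nonneg (hμ x) (hP x y)) (sq_nonneg _)

lemma varOf_nonneg' {μ : n → ℝ} (hμ : ∀ x, 0 ≤ μ x) (f : n → ℝ) : 0 ≤ varOf μ f :=
  Finset.sum_nonneg fun x _ => mul_nonneg (hμ x) (sq_nonneg _)

lemma eq_mean_of_varOf_eq_zero {μ : n → ℝ} (hμ : ∀ x, 0 < μ x) {f : n → ℝ}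
    (h : varOf μ f = 0) (x : n) : f x = meanOf μ f := by
  have h0 : ∀ i ∈ Finset.univ, (0:ℝ) ≤ μ i * (f i - meanOf μ f) ^ 2 :=
    fun i _ => mul_nonneg (hμ i).le (sq_nonneg _)
  have := (Finset.sum_eq_zero_iff_of_nonneg h0).1 h x (Finset.mem_univ x)
  have h2 : (f x - meanOf μ f) ^ 2 = 0 := by
    rcases mul_eq_zero.1 this with h | h
    · exact absurd h (hμ x).ne'
    · exact h
  have := pow_eq_zero_iff (n := 2) (by norm_num) |>.1 h2
  linarith

/-- eigen-sum identity: `∑∑ w q h h = lam * ∑ w h²`. -/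
lemma eig_double_sum (q : Matrix n n ℝ) (w h : n → ℝ) (lam : ℝ)
    (heig : ∀ x, ∑ y, q x y * h y = lam * h x) :
    ∑ x, ∑ y, w x * q x y * h x * h y = lam * ∑ x, w x * h x ^ 2 := by
  have : ∀ x : n, ∑ y, w x * q x y * h x * h y = w x * h x * ∑ y, q x y * h y := by
    intro x
    rw [Finset.mul_sum]
    exact Finset.sum_congr rfl fun y _ => by ring
  rw [Finset.sum_congr rfl fun x _ => this x, Finset.mul_sum]
  exact Finset.sum_congr rfl fun x _ => by rw [heig x]; ring

/-- Ground state inequality. -/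
lemma ground_state (q : Matrix n n ℝ) (w h : n → ℝ) (lam : ℝ)
    (hw : ∀ x, 0 ≤ w x) (hq : ∀ x y, 0 ≤ q x y)
    (hsym : ∀ x y, w x * q x y = w y * q y x)
    (hh : ∀ x, 0 < h x)
    (heig : ∀ x, ∑ y, q x y * h y = lam * h x) (f : n → ℝ) :
    ∑ x, ∑ y, w x * q x y * f x * f y ≤ lam * ∑ x, w x * f x ^ 2 := by
  set g : n → ℝ := fun x => f x / h x with hg
  have hf : ∀ x, f x = g x * h x := fun x => by
    rw [hg]
    rw [div_mul_cancel₀ _ (hh x).ne']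
  have swap : ∑ x, ∑ y, w x * q x y * (h x * h y * g y ^ 2)
      = ∑ x, ∑ y, w x * q x y * (h x * h y * g x ^ 2) := by
    rw [Finset.sum_comm]
    refine Finset.sum_congr rfl fun a _ => Finset.sum_congr rfl fun b _ => ?_
    linear_combination (h b * h a * g a ^ 2) * hsym b a
  have expand : ∑ x, ∑ y, w x * q x y * (h x * h y * (g x - g y) ^ 2)
      = ∑ x, ∑ y, w x * q x y * (h x * h y * g x ^ 2)
        - 2 * ∑ x, ∑ y, w x * q x y * f x * f y
        + ∑ x, ∑ y, w x * q x y * (h x * h y * g y ^ 2) := by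
    have pt : ∀ x y : n, w x * q x y * (h x * h y * (g x - g y) ^ 2)
        = w x * q x y * (h x * h y * g x ^ 2)
          - 2 * (w x * q x y * f x * f y)
          + w x * q x y * (h x * h y * g y ^ 2) := by
      intro x y
      rw [hf x, hf y]
      ring
    simp_rw [pt, Finset.sum_add_distrib, Finset.sum_sub_distrib, ← Finset.mul_sum]
  have S_nonneg : 0 ≤ ∑ x, ∑ y, w x * q x y * (h x * h y * (g x - g y) ^ 2) := by
    refine Finset.sum_nonneg fun x _ => Finset.sum_nonneg fun y _ => ?_
    have : 0 ≤ h x * h y * (g x - g y) ^ 2 :=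
      mul_nonneg (mul_nonneg (hh x).le (hh y).le) (sq_nonneg _)
    exact mul_nonneg (mul_nonneg (hw x) (hq x y)) this
  have main : ∑ x, ∑ y, w x * q x y * (h x * h y * g x ^ 2)
      = lam * ∑ x, w x * f x ^ 2 := by
    have : ∀ x : n, ∑ y, w x * q x y * (h x * h y * g x ^ 2)
        = w x * h x * g x ^ 2 * ∑ y, q x y * h y := by
      intro x
      rw [Finset.mul_sum]
      exact Finset.sum_congr rfl fun y _ => by ring
    rw [Finset.sum_congr rfl fun x _ => this x, Finset.mul_sum]
    refine Finset.sum_congr rfl fun x _ => ?_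
    rw [heig x, hf x]
    ring
  rw [swap, main] at expand
  linarith

/-- Dirichlet bound for a sub-Markovian kernel with a positive eigenfunction. -/
lemma dir_le_ground (q : Matrix n n ℝ) (w h : n → ℝ) (lam : ℝ)
    (hw : ∀ x, 0 ≤ w x)
    (hsym : ∀ x y, w x * q x y = w y * q y x)
    (hrow : ∀ x, ∑ y, q x y ≤ 1)
    (heig : ∀ x, ∑ y, q x y * h y = lam * h x) :
    (1/2) * ∑ x, ∑ y, w x * q x y * (h x - h y) ^ 2 ≤ (1 - lam) * ∑ x, w x * h x ^ 2 := by
  have expand : ∑ x, ∑ y, w x * q x y * (h x - h y) ^ 2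
      = ∑ x, ∑ y, w x * q x y * h x ^ 2
        - 2 * ∑ x, ∑ y, w x * q x y * h x * h y
        + ∑ x, ∑ y, w x * q x y * h y ^ 2 := by
    have pt : ∀ x y : n, w x * q x y * (h x - h y) ^ 2
        = w x * q x y * h x ^ 2 - 2 * (w x * q x y * h x * h y)
          + w x * q x y * h y ^ 2 := fun x y => by ring
    simp_rw [pt, Finset.sum_add_distrib, Finset.sum_sub_distrib, ← Finset.mul_sum]
  have swap : ∑ x, ∑ y, w x * q x y * h y ^ 2 = ∑ x, ∑ y, w x * q x y * h x ^ 2 := by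
    rw [Finset.sum_comm]
    refine Finset.sum_congr rfl fun a _ => Finset.sum_congr rfl fun b _ => ?_
    linear_combination (h a ^ 2) * hsym b a
  have first : ∑ x, ∑ y, w x * q x y * h x ^ 2 ≤ ∑ x, w x * h x ^ 2 := by
    refine Finset.sum_le_sum fun x _ => ?_
    have : ∑ y, w x * q x y * h x ^ 2 = w x * h x ^ 2 * ∑ y, q x y := by
      rw [Finset.mul_sum]
      exact Finset.sum_congr rfl fun y _ => by ring
    rw [this]
    calc w x * h x ^ 2 * ∑ y, q x y ≤ w x * h x ^ 2 * 1 :=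
          mul_le_mul_of_nonneg_left (hrow x) (mul_nonneg (hw x) (sq_nonneg _))
      _ = w x * h x ^ 2 := mul_one _
  have third := eig_double_sum q w h lam heig
  rw [expand, swap, third]
  linarith

lemma const_of_dir_eq_zero [DecidableEq n] {Q : Matrix n n ℝ} (hQ : ∀ x y, 0 ≤ Q x y)
    {g : n → ℝ} (h : ∀ x y, 0 < Q x y → g x = g y) (hirr : Irred Q) (x y : n) :
    g x = g y := by
  have pow_nonneg : ∀ (k : ℕ) (a b : n), 0 ≤ (Q ^ k) a b := by
    intro k
    induction k with
    | zero => intro a b; simp [Matrix.one_apply]; split <;> norm_num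
    | succ m ih =>
      intro a b
      rw [pow_succ, Matrix.mul_apply]
      exact Finset.sum_nonneg fun z _ => mul_nonneg (ih a z) (hQ z b)
  have key : ∀ (k : ℕ) (a b : n), 0 < (Q ^ k) a b → g a = g b := by
    intro k
    induction k with
    | zero =>
      intro a b hab
      rw [pow_zero, Matrix.one_apply] at hab
      by_cases hab' : a = b
      · rw [hab']
      · simp [hab'] at hab
    | succ m ih =>
      intro a b hab
      rw [pow_succ', Matrix.mul_apply] at hab
      obtain ⟨z, _, hz⟩ := Finset.exists_ne_zero_of_sum_ne_zero hab.ne'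
      have h1 : 0 < Q a z := by
        rcases lt_or_eq_of_le (hQ a z) with h' | h'
        · exact h'
        · exact absurd (by rw [← h', zero_mul]) hz
      have h2 : 0 < (Q ^ m) z b := by
        rcases lt_or_eq_of_le (pow_nonneg m z b) with h' | h'
        · exact h'
        · exact absurd (by rw [← h', mul_zero]) hz
      exact (h a z h1).trans (ih z b h2)
  obtain ⟨k, hk⟩ := hirr x y
  exact key k x y hk

lemma meanOf_shift_smul (ν f : n → ℝ) (hν1 : ∑ x, ν x = 1) (m s : ℝ) :
    meanOf ν (fun x => (f x - m) * s) = (meanOf ν f - m) * s := by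
  unfold meanOf
  have pt : ∀ x : n, ν x * ((f x - m) * s) = (ν x * f x) * s - ν x * (m * s) := by
    intro x; ring
  simp_rw [pt, Finset.sum_sub_distrib, ← Finset.sum_mul]
  rw [hν1]
  ring

lemma dirOf_shift_smul (Q : Matrix n n ℝ) (ν f : n → ℝ) (m s : ℝ) :
    dirOf Q ν (fun x => (f x - m) * s) = s ^ 2 * dirOf Q ν f := by
  unfold dirOf
  have pt : ∀ x y : n, ν x * Q x y * ((f x - m) * s - (f y - m) * s) ^ 2
      = s ^ 2 * (ν x * Q x y * (f x - f y) ^ 2) := by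
    intro x y; ring
  simp_rw [pt, ← Finset.mul_sum]
  ring


end Helpers


section Gap

variable {n : Type*} [Fintype n] [DecidableEq n] [Nonempty n]

lemma gapOf_pos_and_poincare (Q : Matrix n n ℝ) (ν : n → ℝ)
    (hQ : ∀ x y, 0 ≤ Q x y) (hν : ∀ x, 0 < ν x) (hν1 : ∑ x, ν x = 1)
    (hirr : Irred Q) (x₀ x₁ : n) (hne : x₀ ≠ x₁) :
    0 < gapOf Q ν ∧ ∀ f : n → ℝ, gapOf Q ν * varOf ν f ≤ dirOf Q ν f := by
  classical
  -- the compact set of normalized mean-zero functions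
  set K : Set (n → ℝ) := {g | meanOf ν g = 0 ∧ ∑ x, ν x * g x ^ 2 = 1} with hK
  have hvar_of_mem : ∀ g ∈ K, varOf ν g = 1 := by
    intro g hg
    unfold varOf
    rw [hg.1]
    simpa using hg.2
  -- continuity facts
  have cont_mean : Continuous (fun g : n → ℝ => meanOf ν g) := by
    unfold meanOf
    exact continuous_finset_sum _ fun x _ => continuous_const.mul (continuous_apply x)
  have cont_sq : Continuous (fun g : n → ℝ => ∑ x, ν x * g x ^ 2) :=
    continuous_finset_sum _ fun x _ => continuous_const.mul ((continuous_apply x).pow 2)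
  have cont_dir : Continuous (fun g : n → ℝ => dirOf Q ν g) := by
    unfold dirOf
    exact continuous_const.mul (continuous_finset_sum _ fun x _ =>
      continuous_finset_sum _ fun y _ =>
        continuous_const.mul (((continuous_apply x).sub (continuous_apply y)).pow 2))
  have hK_closed : IsClosed K := by
    have h1 : IsClosed {g : n → ℝ | meanOf ν g = 0} := isClosed_eq cont_mean continuous_const
    have h2 : IsClosed {g : n → ℝ | ∑ x, ν x * g x ^ 2 = 1} :=
      isClosed_eq cont_sq continuous_const
    exact h1.inter h2
  -- boundedness
  obtain ⟨z, -, hz⟩ : ∃ z ∈ Finset.univ, ∀ x ∈ Finset.univ, ν z ≤ ν x :=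
    Finset.exists_min_image Finset.univ ν ⟨x₀, Finset.mem_univ _⟩
  have hνz : 0 < ν z := hν z
  set C : ℝ := Real.sqrt (1 / ν z) with hC
  have hC0 : 0 ≤ C := Real.sqrt_nonneg _
  have hK_bdd : Bornology.IsBounded K := by
    apply (Metric.isBounded_closedBall (x := (0 : n → ℝ)) (r := C)).subset
    intro g hg
    rw [Metric.mem_closedBall, dist_zero_right]
    rw [pi_norm_le_iff_of_nonneg hC0]
    intro i
    have hterm : ν i * g i ^ 2 ≤ 1 := by
      rw [← hg.2]
      refine Finset.single_le_sum (f := fun x => ν x * g x ^ 2) ?_ (Finset.mem_univ i)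
      exact fun x _ => mul_nonneg (hν x).le (sq_nonneg _)
    have h2 : g i ^ 2 ≤ 1 / ν z := by
      rw [le_div_iff₀ hνz]
      calc g i ^ 2 * ν z ≤ g i ^ 2 * ν i :=
            mul_le_mul_of_nonneg_left (hz i (Finset.mem_univ i)) (sq_nonneg _)
        _ = ν i * g i ^ 2 := by ring
        _ ≤ 1 := hterm
    have : |g i| ≤ C := by
      rw [hC, ← Real.sqrt_sq_eq_abs]
      exact Real.sqrt_le_sqrt h2
    simpa using this
  have hK_cpt : IsCompact K := Metric.isCompact_of_isClosed_isBounded hK_closed hK_bdd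
  -- K is nonempty
  have hK_ne : K.Nonempty := by
    set f : n → ℝ := fun x => if x = x₀ then 1 else 0 with hf
    have hvar_ne : varOf ν f ≠ 0 := by
      intro h0
      have h1 := eq_mean_of_varOf_eq_zero hν h0 x₀
      have h2 := eq_mean_of_varOf_eq_zero hν h0 x₁
      rw [hf] at h1 h2
      simp only [if_pos rfl, if_neg hne.symm] at h1 h2
      rw [← h2] at h1
      norm_num at h1
    have hvar_pos : 0 < varOf ν f :=
      lt_of_le_of_ne (varOf_nonneg' (fun x => (hν x).le) f) (Ne.symm hvar_ne)
    set v := varOf ν f with hv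
    set s : ℝ := (Real.sqrt v)⁻¹ with hs
    have hsv : s ^ 2 = v⁻¹ := by
      rw [hs, inv_pow, Real.sq_sqrt hvar_pos.le]
    refine ⟨fun x => (f x - meanOf ν f) * s, ?_, ?_⟩
    · rw [meanOf_shift_smul ν f hν1]
      simp
    · have pt : ∀ x : n, ν x * ((f x - meanOf ν f) * s) ^ 2
          = (ν x * (f x - meanOf ν f) ^ 2) * s ^ 2 := by intro x; ring
      simp_rw [pt, ← Finset.sum_mul]
      have : ∑ x, ν x * (f x - meanOf ν f) ^ 2 = v := rfl
      rw [this, hsv, mul_inv_cancel₀ hvar_ne]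
  -- minimum of the Dirichlet form over K
  obtain ⟨g₀, hg₀K, hg₀min⟩ := hK_cpt.exists_isMinOn hK_ne cont_dir.continuousOn
  set c := dirOf Q ν g₀ with hc
  have hc_pos : 0 < c := by
    rcases lt_or_eq_of_le (dirOf_nonneg' hQ (fun x => (hν x).le) g₀) with h | h
    · exact h
    exfalso
    -- dirichlet form zero forces g₀ constant
    have hzero : ∀ x y : n, 0 < Q x y → g₀ x = g₀ y := by
      intro x y hxy
      have hsum : ∑ x, ∑ y, ν x * Q x y * (g₀ x - g₀ y) ^ 2 = 0 := by
        have : dirOf Q ν g₀ = 0 := h.symm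
        unfold dirOf at this
        linarith
      have hnn : ∀ a ∈ Finset.univ, (0:ℝ) ≤ ∑ b, ν a * Q a b * (g₀ a - g₀ b) ^ 2 :=
        fun a _ => Finset.sum_nonneg fun b _ =>
          mul_nonneg (mul_nonneg (hν a).le (hQ a b)) (sq_nonneg _)
      have hrow := (Finset.sum_eq_zero_iff_of_nonneg hnn).1 hsum x (Finset.mem_univ x)
      have hnn2 : ∀ b ∈ Finset.univ, (0:ℝ) ≤ ν x * Q x b * (g₀ x - g₀ b) ^ 2 :=
        fun b _ => mul_nonneg (mul_nonneg (hν x).le (hQ x b)) (sq_nonneg _)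
      have := (Finset.sum_eq_zero_iff_of_nonneg hnn2).1 hrow y (Finset.mem_univ y)
      have hne0 : ν x * Q x y ≠ 0 := (mul_pos (hν x) hxy).ne' 
      have : (g₀ x - g₀ y) ^ 2 = 0 := by
        rcases mul_eq_zero.1 this with h' | h'
        · exact absurd h' hne0
        · exact h'
      have := pow_eq_zero_iff (n := 2) (by norm_num) |>.1 this
      linarith
    have hconst : ∀ x y : n, g₀ x = g₀ y := fun x y =>
      const_of_dir_eq_zero hQ hzero hirr x y
    have hmean := hg₀K.1
    have hg0 : ∀ x : n, g₀ x = 0 := by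
      intro x
      have hme : meanOf ν g₀ = g₀ x * ∑ y, ν y := by
        unfold meanOf
        rw [Finset.mul_sum]
        exact Finset.sum_congr rfl fun y _ => by rw [hconst y x]; ring
      rw [hν1, mul_one] at hme
      rw [← hme, hmean]
    have h2 := hg₀K.2
    have h3 : ∑ x, ν x * g₀ x ^ 2 = 0 :=
      Finset.sum_eq_zero fun x _ => by rw [hg0 x]; ring
    exact one_ne_zero (h2.symm.trans h3)
  -- every ratio in the defining set is at least c
  have hlb : ∀ r ∈ {r : ℝ | ∃ f : n → ℝ, varOf ν f ≠ 0 ∧ r = dirOf Q ν f / varOf ν f},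
      c ≤ r := by
    rintro r ⟨f, hvf, rfl⟩
    have hv_pos : 0 < varOf ν f :=
      lt_of_le_of_ne (varOf_nonneg' (fun x => (hν x).le) f) (Ne.symm hvf)
    set v := varOf ν f with hv
    set s : ℝ := (Real.sqrt v)⁻¹ with hs
    have hsv : s ^ 2 = v⁻¹ := by rw [hs, inv_pow, Real.sq_sqrt hv_pos.le]
    set g : n → ℝ := fun x => (f x - meanOf ν f) * s with hg
    have hgK : g ∈ K := by
      constructor
      · rw [hg, meanOf_shift_smul ν f hν1]; simp
      · have pt : ∀ x : n, ν x * ((f x - meanOf ν f) * s) ^ 2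
            = (ν x * (f x - meanOf ν f) ^ 2) * s ^ 2 := by intro x; ring
        rw [hg]
        simp_rw [pt, ← Finset.sum_mul]
        have : ∑ x, ν x * (f x - meanOf ν f) ^ 2 = v := rfl
        rw [this, hsv, mul_inv_cancel₀ hvf]
    have hgd : dirOf Q ν g = dirOf Q ν f / v := by
      rw [hg, dirOf_shift_smul, hsv, div_eq_inv_mul]
    have := hg₀min hgK
    simp only [Set.mem_setOf_eq] at this
    rw [← hc] at this
    rw [← hgd]
    exact this.trans_eq (by rw [hgd])
  have hset_ne : Set.Nonempty {r : ℝ | ∃ f : n → ℝ, varOf ν f ≠ 0 ∧ r = dirOf Q ν f / varOf ν f} := by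
    set f : n → ℝ := fun x => if x = x₀ then 1 else 0 with hf
    have hvar_ne : varOf ν f ≠ 0 := by
      intro h0
      have h1 := eq_mean_of_varOf_eq_zero hν h0 x₀
      have h2 := eq_mean_of_varOf_eq_zero hν h0 x₁
      rw [hf] at h1 h2
      simp only [if_pos rfl, if_neg hne.symm] at h1 h2
      rw [← h2] at h1
      norm_num at h1
    exact ⟨_, f, hvar_ne, rfl⟩
  have hgap_ge : c ≤ gapOf Q ν := le_csInf hset_ne hlb
  have hgap_pos : 0 < gapOf Q ν := lt_of_lt_of_le hc_pos hgap_ge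
  refine ⟨hgap_pos, fun f => ?_⟩
  by_cases hvf : varOf ν f = 0
  · rw [hvf, mul_zero]
    exact dirOf_nonneg' hQ (fun x => (hν x).le) f
  · have hv_pos : 0 < varOf ν f :=
      lt_of_le_of_ne (varOf_nonneg' (fun x => (hν x).le) f) (Ne.symm hvf)
    have hmem : dirOf Q ν f / varOf ν f ∈
        {r : ℝ | ∃ f : n → ℝ, varOf ν f ≠ 0 ∧ r = dirOf Q ν f / varOf ν f} :=
      ⟨f, hvf, rfl⟩
    have hbdd : BddBelow {r : ℝ | ∃ f : n → ℝ, varOf ν f ≠ 0 ∧ r = dirOf Q ν f / varOf ν f} :=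
      ⟨c, hlb⟩
    have := csInf_le hbdd hmem
    have hgap_le : gapOf Q ν ≤ dirOf Q ν f / varOf ν f := this
    calc gapOf Q ν * varOf ν f ≤ (dirOf Q ν f / varOf ν f) * varOf ν f :=
          mul_le_mul_of_nonneg_right hgap_le hv_pos.le
    _ = dirOf Q ν f := div_mul_cancel₀ _ hvf

end Gap


section Restrict

variable {X : Type*} [Fintype X] [DecidableEq X]

lemma dirOf_restrict (p : Matrix X X ℝ) (μ : X → ℝ) (R : Finset X)
    (hp_row : ∀ x, ∑ y, p x y = 1)
    (hrev : ∀ x y, μ x * p x y = μ y * p y x)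
    (F : X → ℝ) (hF : ∀ x ∉ R, F x = 0) :
    dirOf p μ F = (∑ x ∈ R, μ x * F x ^ 2)
      - ∑ x ∈ R, ∑ y ∈ R, μ x * p x y * F x * F y := by
  have expand : ∑ x, ∑ y, μ x * p x y * (F x - F y) ^ 2
      = ∑ x, ∑ y, μ x * p x y * F x ^ 2
        - 2 * ∑ x, ∑ y, μ x * p x y * F x * F y
        + ∑ x, ∑ y, μ x * p x y * F y ^ 2 := by
    have pt : ∀ x y : X, μ x * p x y * (F x - F y) ^ 2
        = μ x * p x y * F x ^ 2 - 2 * (μ x * p x y * F x * F y)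
          + μ x * p x y * F y ^ 2 := fun x y => by ring
    simp_rw [pt, Finset.sum_add_distrib, Finset.sum_sub_distrib, ← Finset.mul_sum]
  have swap : ∑ x, ∑ y, μ x * p x y * F y ^ 2 = ∑ x, ∑ y, μ x * p x y * F x ^ 2 := by
    rw [Finset.sum_comm]
    refine Finset.sum_congr rfl fun a _ => Finset.sum_congr rfl fun b _ => ?_
    linear_combination (F a ^ 2) * hrev b a
  have rows : ∑ x, ∑ y, μ x * p x y * F x ^ 2 = ∑ x, μ x * F x ^ 2 := by
    refine Finset.sum_congr rfl fun x _ => ?_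
    have : ∑ y, μ x * p x y * F x ^ 2 = μ x * F x ^ 2 * ∑ y, p x y := by
      rw [Finset.mul_sum]
      exact Finset.sum_congr rfl fun y _ => by ring
    rw [this, hp_row, mul_one]
  have r1 : ∑ x ∈ R, μ x * F x ^ 2 = ∑ x, μ x * F x ^ 2 :=
    Finset.sum_subset (Finset.subset_univ R) (fun x _ hx => by rw [hF x hx]; ring)
  have r2 : ∑ x ∈ R, ∑ y ∈ R, μ x * p x y * F x * F y
      = ∑ x, ∑ y, μ x * p x y * F x * F y := by
    rw [Finset.sum_subset (Finset.subset_univ R)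
      (fun x _ hx => Finset.sum_eq_zero fun y _ => by rw [hF x hx]; ring)]
    exact Finset.sum_congr rfl fun x _ =>
      Finset.sum_subset (Finset.subset_univ R) (fun y _ hy => by rw [hF y hy]; ring)
  unfold dirOf
  rw [expand, swap, rows, r1, r2]
  ring

lemma weighted_cs (R : Finset X) (μ g : X → ℝ) (hμ : ∀ x, 0 ≤ μ x) :
    (∑ a ∈ R, μ a * g a) ^ 2 ≤ (∑ a ∈ R, μ a) * ∑ a ∈ R, μ a * g a ^ 2 := by
  have h := Finset.sum_mul_sq_le_sq_mul_sq R (fun a => Real.sqrt (μ a))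
    (fun a => Real.sqrt (μ a) * g a)
  have e1 : ∀ a ∈ R, Real.sqrt (μ a) * (Real.sqrt (μ a) * g a) = μ a * g a := by
    intro a _
    rw [← mul_assoc, Real.mul_self_sqrt (hμ a)]
  have e2 : ∀ a ∈ R, (Real.sqrt (μ a)) ^ 2 = μ a := fun a _ => Real.sq_sqrt (hμ a)
  have e3 : ∀ a ∈ R, (Real.sqrt (μ a) * g a) ^ 2 = μ a * g a ^ 2 := by
    intro a _
    rw [mul_pow, Real.sq_sqrt (hμ a)]
  rw [Finset.sum_congr rfl e1, Finset.sum_congr rfl e2, Finset.sum_congr rfl e3] at h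
  exact h

end Restrict

set_option maxHeartbeats 2000000 in
/-- Theorem 2.9 (mean exit time estimates): two-sided bounds on `φ_R^*` in terms of the
`(κ,∞)`-capacity `C_κ(R, X∖R)`. -/
theorem mean_exit_time_estimates
    (X : Type*) [Fintype X] [DecidableEq X]
    (p : Matrix X X ℝ) (μ : X → ℝ) (R : Finset X)
    (hp_nonneg : ∀ x y, 0 ≤ p x y)
    (hp_row : ∀ x, ∑ y, p x y = 1)
    (hp_irr : Irred p)
    (hμ_pos : ∀ x, 0 < μ x)
    (hμ_sum : ∑ x, μ x = 1)
    (hrev : ∀ x y, μ x * p x y = μ y * p y x)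
    (hR_ne : R.Nonempty) (hR_proper : R ≠ Finset.univ)
    (hR_two : 2 ≤ R.card)
    (hpR_irr : Irred (pRefl p R))
    (φstar : ℝ) (hφ_pos : 0 < φstar) (hφ_le : φstar ≤ 1)
    (μstar : R → ℝ) (hμstar_pos : ∀ x, 0 < μstar x)
    (hμstar_sum : ∑ x : R, μstar x = 1)
    (hqs : ∀ y : R, ∑ x : R, μstar x * pKill p R x y = (1 - φstar) * μstar y)
    (κ : ℝ) (hκ : 0 < κ) :
    (capK p μ R κ / ∑ y ∈ R, μ y) * (1 - φstar / gapR p μ R - κ / gapR p μ R) ≤ φstar ∧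
    capK p μ R κ < κ * ∑ y ∈ R, μ y ∧
    φstar ≤ (capK p μ R κ / ∑ y ∈ R, μ y) *
        ((1 - capK p μ R κ / (κ * ∑ y ∈ R, μ y))⁻¹) ^ 2 := by
  classical
  have hM_pos : 0 < ∑ y ∈ R, μ y := Finset.sum_pos (fun x _ => hμ_pos x) hR_ne
  -- the normalized measure on the subtype
  set ν : {x // x ∈ R} → ℝ := fun x => muR μ R ↑x with hν
  have hν_pos : ∀ x, 0 < ν x := by
    intro x
    rw [hν]
    unfold muR
    exact div_pos (hμ_pos _) hM_pos
  have hν1 : ∑ x : {x // x ∈ R}, ν x = 1 := by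
    rw [hν]
    unfold muR
    rw [← Finset.sum_div, Finset.sum_coe_sort R μ, div_self hM_pos.ne']
  have hμν : ∀ x : {x // x ∈ R}, μ ↑x = (∑ y ∈ R, μ y) * ν x := by
    intro x
    rw [hν]
    unfold muR
    field_simp
  -- the positive eigenfunction of the killed kernel
  set h : {x // x ∈ R} → ℝ := fun x => μstar x * (∑ y ∈ R, μ y) / μ ↑x with hh
  have h_pos : ∀ x, 0 < h x := by
    intro x
    rw [hh]
    exact div_pos (mul_pos (hμstar_pos x) hM_pos) (hμ_pos _)
  have heig : ∀ x : {x // x ∈ R}, ∑ y : {x // x ∈ R}, p ↑x ↑y * h y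
      = (1 - φstar) * h x := by
    intro x
    have pt : ∀ y : {x // x ∈ R}, p ↑x ↑y * h y
        = ((∑ y ∈ R, μ y) / μ ↑x) * (μstar y * p ↑y ↑x) := by
      intro y
      rw [hh]
      have h1 := hrev (↑x : X) (↑y : X)
      have hx0 : μ (↑x : X) ≠ 0 := (hμ_pos _).ne'
      have hy0 : μ (↑y : X) ≠ 0 := (hμ_pos _).ne'
      field_simp
      linear_combination (μstar y) * h1
    rw [Finset.sum_congr rfl fun y _ => pt y, ← Finset.mul_sum]
    have h2 := hqs x
    simp only [pKill] at h2
    rw [h2, hh]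
    field_simp
  -- ground state inequality for the killed kernel
  have key_ground : ∀ f : {x // x ∈ R} → ℝ,
      ∑ x : {x // x ∈ R}, ∑ y : {x // x ∈ R}, μ ↑x * p ↑x ↑y * f x * f y
        ≤ (1 - φstar) * ∑ x : {x // x ∈ R}, μ ↑x * f x ^ 2 :=
    fun f => ground_state (fun x y : {x // x ∈ R} => p ↑x ↑y) (fun x => μ ↑x) h
      (1 - φstar) (fun x => (hμ_pos _).le) (fun x y => hp_nonneg _ _)
      (fun x y => hrev _ _) h_pos heig f
  -- the fundamental Dirichlet lower bound
  have key4 : ∀ F : X → ℝ, (∀ x ∉ R, F x = 0) →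
      φstar * ∑ x ∈ R, μ x * F x ^ 2 ≤ dirOf p μ F := by
    intro F hF
    rw [dirOf_restrict p μ R hp_row hrev F hF]
    have conv1 : ∑ x ∈ R, μ x * F x ^ 2 = ∑ x : {x // x ∈ R}, μ ↑x * F ↑x ^ 2 :=
      (Finset.sum_coe_sort R (fun x => μ x * F x ^ 2)).symm
    have conv2 : ∑ x ∈ R, ∑ y ∈ R, μ x * p x y * F x * F y
        = ∑ x : {x // x ∈ R}, ∑ y : {x // x ∈ R}, μ ↑x * p ↑x ↑y * F ↑x * F ↑y := by
      rw [← Finset.sum_coe_sort R (fun x => ∑ y ∈ R, μ x * p x y * F x * F y)]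
      exact Finset.sum_congr rfl fun x _ =>
        (Finset.sum_coe_sort R (fun y => μ ↑x * p ↑x y * F ↑x * F y)).symm
    rw [conv1, conv2]
    have := key_ground (fun x => F ↑x)
    linarith
  -- spectral gap facts
  obtain ⟨a, ha, b, hb, hab⟩ := Finset.one_lt_card.1 (lt_of_lt_of_le one_lt_two hR_two)
  have hx01 : (⟨a, ha⟩ : {x // x ∈ R}) ≠ ⟨b, hb⟩ := by
    simp only [ne_eq, Subtype.mk.injEq]
    exact hab
  have hQnn : ∀ x y : {x // x ∈ R}, 0 ≤ pRefl p R x y := by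
    intro x y
    unfold pRefl
    split
    · refine add_nonneg (hp_nonneg _ _) ?_
      unfold escR
      exact Finset.sum_nonneg fun z _ => hp_nonneg _ _
    · exact hp_nonneg _ _
  have : Nonempty {x // x ∈ R} := ⟨⟨a, ha⟩⟩
  obtain ⟨hγ_pos, hpoin⟩ := gapOf_pos_and_poincare (pRefl p R) ν hQnn hν_pos hν1
    hpR_irr ⟨a, ha⟩ ⟨b, hb⟩ hx01
  have hgapR : gapR p μ R = gapOf (pRefl p R) ν := by rw [hν]; rfl
  -- reflected Dirichlet form of h is bounded by φstar * second moment
  have hsym_ν : ∀ x y : {x // x ∈ R}, ν x * p ↑x ↑y = ν y * p ↑y ↑x := by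
    intro x y
    rw [hν]
    unfold muR
    rw [div_mul_eq_mul_div, div_mul_eq_mul_div, hrev]
  have hrow_sub : ∀ x : {x // x ∈ R}, ∑ y : {x // x ∈ R}, p ↑x ↑y ≤ 1 := by
    intro x
    rw [Finset.sum_coe_sort R (fun y => p ↑x y)]
    calc ∑ y ∈ R, p ↑x y ≤ ∑ y, p ↑x y :=
          Finset.sum_le_sum_of_subset_of_nonneg (Finset.subset_univ R)
            (fun y _ _ => hp_nonneg _ _)
      _ = 1 := hp_row _
  have dir1 : dirOf (pRefl p R) ν h
      = (1/2) * ∑ x : {x // x ∈ R}, ∑ y : {x // x ∈ R}, ν x * p ↑x ↑y * (h x - h y) ^ 2 := by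
    unfold dirOf
    congr 1
    refine Finset.sum_congr rfl fun x _ => Finset.sum_congr rfl fun y _ => ?_
    by_cases hxy : x = y
    · subst hxy
      simp
    · have hne : ((x : X) : X) ≠ (y : X) := fun hc => hxy (Subtype.ext hc)
      unfold pRefl
      rw [if_neg hne]
  have dir2 : dirOf (pRefl p R) ν h ≤ φstar * ∑ x : {x // x ∈ R}, ν x * h x ^ 2 := by
    rw [dir1]
    have := dir_le_ground (fun x y : {x // x ∈ R} => p ↑x ↑y) ν h (1 - φstar)
      (fun x => (hν_pos x).le) hsym_ν hrow_sub heig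
    have e : 1 - (1 - φstar) = φstar := by ring
    rw [e] at this
    exact this
  -- mean and variance of h
  have hνh : ∀ x : {x // x ∈ R}, ν x * h x = μstar x := by
    intro x
    rw [hν, hh]
    unfold muR
    field_simp [(hμ_pos (↑x : X)).ne', hM_pos.ne']
  have hmean : meanOf ν h = 1 := by
    unfold meanOf
    rw [Finset.sum_congr rfl fun x _ => hνh x]
    exact hμstar_sum
  have hVar : ∑ x : {x // x ∈ R}, ν x * h x ^ 2 = varOf ν h + 1 := by
    unfold varOf
    rw [hmean]
    have pt : ∑ x : {x // x ∈ R}, ν x * (h x - 1) ^ 2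
        = ∑ x : {x // x ∈ R}, (ν x * h x ^ 2 - 2 * (ν x * h x) + ν x) :=
      Finset.sum_congr rfl fun x _ => by ring
    rw [pt, Finset.sum_add_distrib, Finset.sum_sub_distrib, ← Finset.mul_sum,
      Finset.sum_congr rfl fun x _ => hνh x, hμstar_sum, hν1]
    ring
  have hV_nonneg : 0 ≤ varOf ν h := varOf_nonneg' (fun x => (hν_pos x).le) h
  have hgv : gapOf (pRefl p R) ν * varOf ν h ≤ φstar * (varOf ν h + 1) := by
    have h1 := hpoin h
    have h2 := dir2
    rw [hVar] at h2
    linarith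
  -- the capacity set
  set Scap : Set ℝ := {r : ℝ | ∃ f : X → ℝ, (∀ x ∉ R, f x = 0) ∧
    r = dirOf p μ f + κ * ∑ a ∈ R, μ a * (f a - 1) ^ 2} with hScap
  have hcapK : capK p μ R κ = sInf Scap := by rw [hScap]; rfl
  have hScap_lb : ∀ r ∈ Scap, 0 ≤ r := by
    rintro r ⟨f, hf0, rfl⟩
    have h1 := dirOf_nonneg' hp_nonneg (fun x => (hμ_pos x).le) f
    have h2 : 0 ≤ ∑ a ∈ R, μ a * (f a - 1) ^ 2 :=
      Finset.sum_nonneg fun a _ => mul_nonneg (hμ_pos a).le (sq_nonneg _)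
    positivity
  -- the test function H for the upper bound on the capacity
  set H : X → ℝ := fun x => if hx : x ∈ R then h ⟨x, hx⟩ else 0 with hH
  have hHoff : ∀ x ∉ R, H x = 0 := by
    intro x hx
    rw [hH]
    exact dif_neg hx
  have hHx : ∀ x : {x // x ∈ R}, H ↑x = h x := by
    intro x
    rw [hH]
    exact dif_pos x.2
  have hHsq : ∑ a ∈ R, μ a * (H a - 1) ^ 2 = (∑ y ∈ R, μ y) * varOf ν h := by
    rw [← Finset.sum_coe_sort R (fun a => μ a * (H a - 1) ^ 2)]
    unfold varOf
    rw [hmean, Finset.mul_sum]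
    refine Finset.sum_congr rfl fun x _ => ?_
    rw [hHx x, hμν x]
    ring
  have hDH : dirOf p μ H = φstar * ((∑ y ∈ R, μ y) * (varOf ν h + 1)) := by
    rw [dirOf_restrict p μ R hp_row hrev H hHoff]
    have e1 : ∑ x ∈ R, μ x * H x ^ 2 = ∑ x : {x // x ∈ R}, μ ↑x * h x ^ 2 := by
      rw [← Finset.sum_coe_sort R (fun x => μ x * H x ^ 2)]
      exact Finset.sum_congr rfl fun x _ => by rw [hHx x]
    have e2 : ∑ x ∈ R, ∑ y ∈ R, μ x * p x y * H x * H y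
        = (1 - φstar) * ∑ x : {x // x ∈ R}, μ ↑x * h x ^ 2 := by
      have c2 : ∑ x ∈ R, ∑ y ∈ R, μ x * p x y * H x * H y
          = ∑ x : {x // x ∈ R}, ∑ y : {x // x ∈ R}, μ ↑x * p ↑x ↑y * h x * h y := by
        rw [← Finset.sum_coe_sort R (fun x => ∑ y ∈ R, μ x * p x y * H x * H y)]
        refine Finset.sum_congr rfl fun x _ => ?_
        rw [← Finset.sum_coe_sort R (fun y => μ ↑x * p ↑x y * H ↑x * H y)]
        exact Finset.sum_congr rfl fun y _ => by rw [hHx x, hHx y]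
      rw [c2]
      exact eig_double_sum (fun x y : {x // x ∈ R} => p ↑x ↑y) (fun x => μ ↑x) h
        (1 - φstar) heig
    have e3 : ∑ x : {x // x ∈ R}, μ ↑x * h x ^ 2
        = (∑ y ∈ R, μ y) * (varOf ν h + 1) := by
      rw [← hVar, Finset.mul_sum]
      exact Finset.sum_congr rfl fun x _ => by rw [hμν x]; ring
    rw [e1, e2, e3]
    ring
  have hmemH : dirOf p μ H + κ * ∑ a ∈ R, μ a * (H a - 1) ^ 2 ∈ Scap := ⟨H, hHoff, rfl⟩
  have hScap_ne : Scap.Nonempty := ⟨_, hmemH⟩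
  have hcap_le : capK p μ R κ
      ≤ (∑ y ∈ R, μ y) * (φstar * (varOf ν h + 1) + κ * varOf ν h) := by
    rw [hcapK]
    refine le_trans (csInf_le ⟨0, hScap_lb⟩ hmemH) ?_
    rw [hDH, hHsq]
    ring_nf
    nlinarith [hM_pos, hV_nonneg]
  have hcap_nonneg : 0 ≤ capK p μ R κ := by
    rw [hcapK]
    exact le_csInf hScap_ne hScap_lb
  -- Part 2: capK < κ * μ(R)
  have part2 : capK p μ R κ < κ * ∑ y ∈ R, μ y := by
    set f1 : X → ℝ := fun x => if x ∈ R then (1:ℝ) else 0 with hf1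
    set d : ℝ := dirOf p μ f1 with hd
    have hd0 : 0 ≤ d := dirOf_nonneg' hp_nonneg (fun x => (hμ_pos x).le) f1
    set s : ℝ := d + κ * ∑ y ∈ R, μ y with hs
    have hs_pos : 0 < s := by
      rw [hs]
      have := mul_pos hκ hM_pos
      linarith
    set t : ℝ := (κ * ∑ y ∈ R, μ y) / s with hT
    set ft : X → ℝ := fun x => if x ∈ R then t else 0 with hft
    have hft_eq : ft = fun x => (f1 x - 0) * t := by
      funext x
      rw [hft, hf1]
      by_cases hx : x ∈ R <;> simp [hx]
    have hft_dir : dirOf p μ ft = t ^ 2 * d := by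
      rw [hft_eq, dirOf_shift_smul p μ f1 0 t, hd]
    have hft_off : ∀ x ∉ R, ft x = 0 := by
      intro x hx
      rw [hft]
      exact if_neg hx
    have hft_sum : ∑ a ∈ R, μ a * (ft a - 1) ^ 2 = (t - 1) ^ 2 * ∑ y ∈ R, μ y := by
      rw [Finset.mul_sum]
      refine Finset.sum_congr rfl fun a haR => ?_
      simp only [hft]
      rw [if_pos haR]
      ring
    have hmem : dirOf p μ ft + κ * ∑ a ∈ R, μ a * (ft a - 1) ^ 2 ∈ Scap := ⟨ft, hft_off, rfl⟩
    have hle := csInf_le ⟨0, hScap_lb⟩ hmem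
    rw [← hcapK] at hle
    refine lt_of_le_of_lt hle ?_
    rw [hft_dir, hft_sum]
    have ht1 : t - 1 = -d / s := by
      rw [hT]
      field_simp
      rw [hs]
      ring
    have hval : t ^ 2 * d + κ * ((t - 1) ^ 2 * ∑ y ∈ R, μ y)
        = κ * (∑ y ∈ R, μ y) * d / s := by
      rw [ht1, hT]
      field_simp
      rw [hs]
      ring
    rw [hval, div_lt_iff₀ hs_pos]
    rw [hs]
    nlinarith [mul_pos hκ hM_pos, hd0]
  -- Part 3 preliminary: lower bound on every element of the capacity set
  have hlow : ∀ r ∈ Scap,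
      φstar * κ * (∑ y ∈ R, μ y) / (φstar + κ) ≤ r := by
    rintro r ⟨f, hf0, rfl⟩
    have hD := key4 f hf0
    set m : ℝ := ∑ a ∈ R, μ a * f a with hm
    have hcs1 : m ^ 2 ≤ (∑ y ∈ R, μ y) * ∑ a ∈ R, μ a * f a ^ 2 :=
      weighted_cs R μ f (fun x => (hμ_pos x).le)
    have hsub : ∑ a ∈ R, μ a * (f a - 1) = m - ∑ y ∈ R, μ y := by
      rw [hm, ← Finset.sum_sub_distrib]
      exact Finset.sum_congr rfl fun a _ => by ring
    have hcs2 : (m - ∑ y ∈ R, μ y) ^ 2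
        ≤ (∑ y ∈ R, μ y) * ∑ a ∈ R, μ a * (f a - 1) ^ 2 := by
      have := weighted_cs R μ (fun a => f a - 1) (fun x => (hμ_pos x).le)
      rw [hsub] at this
      exact this
    have hφκ : 0 < φstar + κ := by linarith
    have key : φstar * κ * (∑ y ∈ R, μ y) / (φstar + κ)
        ≤ (φstar * m ^ 2 + κ * (m - ∑ y ∈ R, μ y) ^ 2) / (∑ y ∈ R, μ y) := by
      rw [div_le_div_iff₀ hφκ hM_pos]
      nlinarith [sq_nonneg ((φstar + κ) * m - κ * ∑ y ∈ R, μ y)]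
    refine key.trans ?_
    rw [div_le_iff₀ hM_pos]
    have b1 : φstar * m ^ 2 ≤ φstar * ((∑ y ∈ R, μ y) * ∑ a ∈ R, μ a * f a ^ 2) :=
      mul_le_mul_of_nonneg_left hcs1 hφ_pos.le
    have b2 : κ * (m - ∑ y ∈ R, μ y) ^ 2
        ≤ κ * ((∑ y ∈ R, μ y) * ∑ a ∈ R, μ a * (f a - 1) ^ 2) :=
      mul_le_mul_of_nonneg_left hcs2 hκ.le
    have b3 : φstar * ∑ a ∈ R, μ a * f a ^ 2 ≤ dirOf p μ f := hD
    have b4 := mul_le_mul_of_nonneg_right b3 hM_pos.le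
    have b5 : 0 ≤ κ * ∑ a ∈ R, μ a * (f a - 1) ^ 2 :=
      mul_nonneg hκ.le (Finset.sum_nonneg fun a _ =>
        mul_nonneg (hμ_pos a).le (sq_nonneg _))
    nlinarith [b1, b2, b4]
  have hcap_ge : φstar * κ * (∑ y ∈ R, μ y) / (φstar + κ) ≤ capK p μ R κ := by
    rw [hcapK]
    exact le_csInf hScap_ne hlow
  refine ⟨?_, part2, ?_⟩
  -- Part 1
  · rcases le_or_gt (1 - φstar / gapR p μ R - κ / gapR p μ R) 0 with ht | ht
    · have h1 : 0 ≤ capK p μ R κ / ∑ y ∈ R, μ y := div_nonneg hcap_nonneg hM_pos.le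
      exact le_trans (mul_nonpos_of_nonneg_of_nonpos h1 ht) hφ_pos.le
    · rw [hgapR] at ht ⊢
      set γ : ℝ := gapOf (pRefl p R) ν with hγ
      set V : ℝ := varOf ν h with hVd
      have hA : capK p μ R κ / (∑ y ∈ R, μ y) ≤ φstar * (V + 1) + κ * V := by
        rw [div_le_iff₀ hM_pos]
        calc capK p μ R κ ≤ (∑ y ∈ R, μ y) * (φstar * (V + 1) + κ * V) := hcap_le
          _ = (φstar * (V + 1) + κ * V) * ∑ y ∈ R, μ y := by ring
      have hkey : (φstar * (V + 1) + κ * V) * (1 - φstar / γ - κ / γ) ≤ φstar := by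
        have e : 1 - φstar / γ - κ / γ = (γ - φstar - κ) / γ := by
          field_simp
        rw [e, mul_div_assoc', div_le_iff₀ hγ_pos]
        have hint : (φstar + κ) * (γ * V - (φstar * (V + 1) + κ * V)) ≤ 0 := by
          have : γ * V ≤ φstar * (V + 1) + κ * V := by
            have := hgv
            nlinarith [mul_nonneg hκ.le hV_nonneg]
          nlinarith [this, hφ_pos, hκ]
        nlinarith [hint]
      calc capK p μ R κ / (∑ y ∈ R, μ y) * (1 - φstar / γ - κ / γ)
          ≤ (φstar * (V + 1) + κ * V) * (1 - φstar / γ - κ / γ) :=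
            mul_le_mul_of_nonneg_right hA ht.le
        _ ≤ φstar := hkey
  -- Part 3
  · set C : ℝ := capK p μ R κ with hC
    set M : ℝ := ∑ y ∈ R, μ y with hMd
    have hden : 0 < κ * M - C := by
      rw [hMd] at *
      linarith [part2]
    have h5 : φstar * (κ * M - C) ≤ C * κ := by
      have h6 : φstar * κ * M ≤ C * (φstar + κ) := by
        have := hcap_ge
        rw [div_le_iff₀ (by linarith : (0:ℝ) < φstar + κ)] at this
        linarith [this]
      nlinarith [h6]
    have hu : (1 : ℝ) - C / (κ * M) = (κ * M - C) / (κ * M) := by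
      field_simp
    rw [hu, inv_div, div_pow, mul_div_assoc', le_div_iff₀ (by positivity), div_mul_eq_mul_div,
      le_div_iff₀ hM_pos]
    nlinarith [mul_le_mul_of_nonneg_right h5 (mul_nonneg hden.le hM_pos.le),
      mul_pos hκ hM_pos, hden, hcap_nonneg,
      mul_nonneg (mul_nonneg (mul_nonneg hcap_nonneg hcap_nonneg) hκ.le) hM_pos.le]
end
end

section
/- φ_R^* = min{ D(f)/(Σ_{x∈X} μ(x)f(x)²) : f : X → ℝ, f not identically zero, f ≡ 0 on X∖R }; moreover the series S = Σ_{k=0}^∞ Σ_{x,y∈R} μ_R(x)·((p_R^*)^k)(x,y) converges (it equals the mean exit time E_{μ_R}[τ_{X∖R}] of the continuous-time chain started from μ_R) and φ_R^* ≤ 1/S ≤ φ_R. -/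
open Finset

noncomputable section

lemma cs_quad (a b c : ℝ) (h : ∀ t : ℝ, 0 ≤ a * t ^ 2 + 2 * b * t + c) :
    b ^ 2 ≤ a * c := by
  have hd := discrim_le_zero (a := a) (b := 2 * b) (c := c) (fun t => by nlinarith [h t])
  rw [discrim] at hd
  nlinarith

lemma cs_weighted {ι : Type*} (s : Finset ι) (w f g : ι → ℝ)
    (hw : ∀ i ∈ s, 0 ≤ w i) :
    (∑ i ∈ s, w i * f i * g i) ^ 2 ≤ (∑ i ∈ s, w i * f i ^ 2) * (∑ i ∈ s, w i * g i ^ 2) := by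
  apply cs_quad
  intro t
  have h0 : 0 ≤ ∑ i ∈ s, w i * (f i * t + g i) ^ 2 :=
    Finset.sum_nonneg fun i hi => mul_nonneg (hw i hi) (sq_nonneg _)
  calc (0:ℝ) ≤ ∑ i ∈ s, w i * (f i * t + g i) ^ 2 := h0
    _ = ∑ i ∈ s, ((w i * f i ^ 2) * t ^ 2 + (w i * f i * g i) * (2 * t) + w i * g i ^ 2) :=
        Finset.sum_congr rfl (fun i _ => by ring)
    _ = (∑ i ∈ s, w i * f i ^ 2) * t ^ 2 + (∑ i ∈ s, w i * f i * g i) * (2 * t)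
        + ∑ i ∈ s, w i * g i ^ 2 := by
        rw [Finset.sum_add_distrib, Finset.sum_add_distrib, ← Finset.sum_mul, ← Finset.sum_mul]
    _ = (∑ i ∈ s, w i * f i ^ 2) * t ^ 2 + 2 * (∑ i ∈ s, w i * f i * g i) * t
        + ∑ i ∈ s, w i * g i ^ 2 := by ring

lemma amgm (a b hx hy : ℝ) (hhx : 0 < hx) (hhy : 0 < hy) :
    a * b ≤ (a ^ 2 * (hy / hx) + b ^ 2 * (hx / hy)) / 2 := by
  have hkey : a ^ 2 * (hy / hx) + b ^ 2 * (hx / hy) - 2 * (a * b)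
      = (a * hy - b * hx) ^ 2 / (hx * hy) := by
    field_simp; ring
  have h2 : 0 ≤ (a * hy - b * hx) ^ 2 / (hx * hy) :=
    div_nonneg (sq_nonneg _) (le_of_lt (mul_pos hhx hhy))
  linarith [hkey ▸ h2]

set_option maxHeartbeats 2000000 in
/-- Lemma 2.2: variational characterization of `φ_R^*` and the bounds
`φ_R^* ≤ 1/E_{μ_R}[τ_{X∖R}] ≤ φ_R`. -/
theorem phi_star_variational
    (X : Type*) [Fintype X] [DecidableEq X]
    (p : Matrix X X ℝ) (μ : X → ℝ) (R : Finset X)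
    (hp_nonneg : ∀ x y, 0 ≤ p x y)
    (hp_row : ∀ x, ∑ y, p x y = 1)
    (hp_irr : Irred p)
    (hμ_pos : ∀ x, 0 < μ x)
    (hμ_sum : ∑ x, μ x = 1)
    (hrev : ∀ x y, μ x * p x y = μ y * p y x)
    (hR_ne : R.Nonempty) (hR_proper : R ≠ Finset.univ)
    (φstar : ℝ) (hφ_pos : 0 < φstar) (hφ_le : φstar ≤ 1)
    (μstar : R → ℝ) (hμstar_pos : ∀ x, 0 < μstar x)
    (hμstar_sum : ∑ x : R, μstar x = 1)
    (hqs : ∀ y : R, ∑ x : R, μstar x * pKill p R x y = (1 - φstar) * μstar y)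
 :
    φstar = sInf {r : ℝ | ∃ f : X → ℝ, f ≠ 0 ∧ (∀ x ∉ R, f x = 0) ∧
        r = dirOf p μ f / ∑ x, μ x * f x ^ 2} ∧
    Summable (fun k : ℕ => ∑ x : R, ∑ y : R, muR μ R x * (pKill p R ^ k) x y) ∧
    φstar ≤ 1 / ∑' k : ℕ, ∑ x : R, ∑ y : R, muR μ R x * (pKill p R ^ k) x y ∧
    1 / (∑' k : ℕ, ∑ x : R, ∑ y : R, muR μ R x * (pKill p R ^ k) x y)
      ≤ ∑ x : R, muR μ R x * escR p R x := by
  classical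
  set A : Matrix R R ℝ := pKill p R with hA
  have hAdef : ∀ x y : R, A x y = p (x : X) (y : X) := fun x y => rfl
  set Z : ℝ := ∑ y ∈ R, μ y with hZdef
  set lam : ℝ := 1 - φstar with hlamdef
  have hZpos : 0 < Z := Finset.sum_pos (fun x _ => hμ_pos x) hR_ne
  have hlam0 : 0 ≤ lam := by rw [hlamdef]; linarith
  have hlam1 : lam < 1 := by rw [hlamdef]; linarith
  have hA0 : ∀ x y : R, 0 ≤ A x y := fun x y => (hAdef x y) ▸ hp_nonneg _ _
  have hArev : ∀ x y : R, μ x * A x y = μ y * A y x := by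
    intro x y; rw [hAdef, hAdef]; exact hrev _ _
  set h : R → ℝ := fun x => μstar x / μ x with hhdef
  have hhpos : ∀ x : R, 0 < h x := fun x => div_pos (hμstar_pos x) (hμ_pos x)
  have hqs' : ∀ y : R, ∑ x : R, μstar x * A x y = lam * μstar y := by
    intro y; rw [hlamdef]; exact hqs y
  have heig : ∀ x : R, ∑ y : R, A x y * h y = lam * h x := by
    intro x
    have e1 : ∀ y : R, A x y * h y = (μstar y * A y x) / μ (x : X) := by
      intro y
      have h1 : μ (x : X) * A x y = μ (y : X) * A y x := hArev x y
      have h2 : (μ (y : X)) ≠ 0 := ne_of_gt (hμ_pos _)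
      have h3 : (μ (x : X)) ≠ 0 := ne_of_gt (hμ_pos _)
      rw [hhdef]
      field_simp
      linear_combination μstar y * h1
    rw [Finset.sum_congr rfl (fun y _ => e1 y), ← Finset.sum_div, hqs' x, hhdef]
    field_simp
  -- Rayleigh bound

  have hRay : ∀ f : R → ℝ,
      (∑ x : R, ∑ y : R, μ (x : X) * A x y * f x * f y) ≤ lam * ∑ x : R, μ (x : X) * f x ^ 2 := by
    intro f
    have step1 : ∀ x y : R, 2 * (μ (x:X) * A x y * f x * f y)
        ≤ μ (x:X) * A x y * (f x ^ 2 * (h y / h x)) + μ (x:X) * A x y * (f y ^ 2 * (h x / h y)) := by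
      intro x y
      have hab := amgm (f x) (f y) (h x) (h y) (hhpos x) (hhpos y)
      have hw : 0 ≤ μ (x:X) * A x y := mul_nonneg (le_of_lt (hμ_pos _)) (hA0 x y)
      nlinarith [mul_le_mul_of_nonneg_left hab hw]
    have main : ∑ x : R, ∑ y : R, 2 * (μ (x:X) * A x y * f x * f y)
        ≤ ∑ x : R, ∑ y : R, (μ (x:X) * A x y * (f x ^ 2 * (h y / h x))
            + μ (x:X) * A x y * (f y ^ 2 * (h x / h y))) :=
      Finset.sum_le_sum fun x _ => Finset.sum_le_sum fun y _ => step1 x y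
    have t1e : ∑ x : R, ∑ y : R, μ (x:X) * A x y * (f x ^ 2 * (h y / h x))
        = lam * ∑ x : R, μ (x:X) * f x ^ 2 := by
      rw [Finset.mul_sum]
      refine Finset.sum_congr rfl fun x _ => ?_
      have e : ∀ y : R, μ (x:X) * A x y * (f x ^ 2 * (h y / h x))
          = (μ (x:X) * f x ^ 2 / h x) * (A x y * h y) := fun y => by ring
      rw [Finset.sum_congr rfl fun y _ => e y, ← Finset.mul_sum, heig x]
      have := (hhpos x).ne'
      field_simp
    have t2e : ∑ x : R, ∑ y : R, μ (x:X) * A x y * (f y ^ 2 * (h x / h y))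
        = lam * ∑ x : R, μ (x:X) * f x ^ 2 := by
      rw [Finset.sum_comm]
      have e : ∀ y x : R, μ (x:X) * A x y * (f y ^ 2 * (h x / h y))
          = (μ (y:X) * f y ^ 2 / h y) * (A y x * h x) := by
        intro y x
        have h1 := hArev x y
        linear_combination (f y ^ 2 * h x / h y) * h1
      calc ∑ y : R, ∑ x : R, μ (x:X) * A x y * (f y ^ 2 * (h x / h y))
          = ∑ y : R, (μ (y:X) * f y ^ 2 / h y) * ∑ x : R, (A y x * h x) := by
            refine Finset.sum_congr rfl fun y _ => ?_
            rw [Finset.mul_sum]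
            exact Finset.sum_congr rfl fun x _ => e y x
        _ = ∑ y : R, (μ (y:X) * f y ^ 2 / h y) * (lam * h y) := by
            refine Finset.sum_congr rfl fun y _ => ?_
            rw [heig y]
        _ = lam * ∑ y : R, μ (y:X) * f y ^ 2 := by
            rw [Finset.mul_sum]
            refine Finset.sum_congr rfl fun y _ => ?_
            have h2 := (hhpos y).ne'
            field_simp
    have twoQ : ∑ x : R, ∑ y : R, 2 * (μ (x:X) * A x y * f x * f y)
        = 2 * ∑ x : R, ∑ y : R, μ (x:X) * A x y * f x * f y := by
      rw [Finset.mul_sum]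
      exact Finset.sum_congr rfl fun x _ => by rw [Finset.mul_sum]
    have split : ∑ x : R, ∑ y : R, (μ (x:X) * A x y * (f x ^ 2 * (h y / h x))
            + μ (x:X) * A x y * (f y ^ 2 * (h x / h y)))
        = (∑ x : R, ∑ y : R, μ (x:X) * A x y * (f x ^ 2 * (h y / h x)))
          + ∑ x : R, ∑ y : R, μ (x:X) * A x y * (f y ^ 2 * (h x / h y)) := by
      rw [← Finset.sum_add_distrib]
      exact Finset.sum_congr rfl fun x _ => by rw [← Finset.sum_add_distrib]
    rw [twoQ, split, t1e, t2e] at main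
    linarith

  -- powers
  have hpow0 : ∀ (k : ℕ) (x y : R), 0 ≤ (A ^ k) x y := by
    intro k
    induction k with
    | zero => intro x y; rw [pow_zero, Matrix.one_apply]; split <;> norm_num
    | succ n ih =>
      intro x y
      rw [pow_succ, Matrix.mul_apply]
      exact Finset.sum_nonneg fun j _ => mul_nonneg (ih x j) (hA0 j y)
  have hpowL : ∀ (k : ℕ) (y : R), ∑ x : R, μstar x * (A ^ k) x y = lam ^ k * μstar y := by
    intro k
    induction k with
    | zero =>
      intro y
      simp [Matrix.one_apply, mul_ite, Finset.sum_ite_eq]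
    | succ n ih =>
      intro y
      have e1 : ∀ x : R, μstar x * (A ^ (n + 1)) x y
          = ∑ z : R, μstar x * (A ^ n) x z * A z y := by
        intro x
        rw [pow_succ, Matrix.mul_apply, Finset.mul_sum]
        exact Finset.sum_congr rfl fun z _ => by ring
      rw [Finset.sum_congr rfl fun x _ => e1 x, Finset.sum_comm]
      have e2 : ∀ z : R, ∑ x : R, μstar x * (A ^ n) x z * A z y
          = (lam ^ n * μstar z) * A z y := by
        intro z
        rw [← Finset.sum_mul, ih z]
      rw [Finset.sum_congr rfl fun z _ => e2 z]
      have e3 : ∑ z : R, lam ^ n * μstar z * A z y = lam ^ n * ∑ z : R, μstar z * A z y := by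
        rw [Finset.mul_sum]; exact Finset.sum_congr rfl fun z _ => by ring
      rw [e3, hqs' y, pow_succ]
      ring
  have hpowB : ∀ (k : ℕ) (x y : R), (A ^ k) x y ≤ lam ^ k * (μstar y / μstar x) := by
    intro k x y
    have h1 : μstar x * (A ^ k) x y ≤ ∑ z : R, μstar z * (A ^ k) z y :=
      Finset.single_le_sum (f := fun z => μstar z * (A ^ k) z y)
        (fun z _ => mul_nonneg (hμstar_pos z).le (hpow0 k z y)) (Finset.mem_univ x)
    rw [hpowL k y] at h1
    have hx := hμstar_pos x
    rw [mul_div_assoc'] at *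
    rw [le_div_iff₀ hx]
    linarith [h1]

  have hmuR : ∀ x : R, muR μ R (x : X) = μ (x : X) / Z := fun x => by rw [muR, hZdef]
  -- the series terms
  set a : ℕ → ℝ := fun k => ∑ x : R, ∑ y : R, muR μ R (x : X) * (A ^ k) x y with hadef
  have ha_nonneg : ∀ k, 0 ≤ a k := by
    intro k
    refine Finset.sum_nonneg fun x _ => Finset.sum_nonneg fun y _ => ?_
    exact mul_nonneg (by rw [hmuR]; exact div_nonneg (hμ_pos _).le hZpos.le) (hpow0 k x y)
  set C : ℝ := ∑ x : R, ∑ y : R, (μ (x : X) / Z) * (μstar y / μstar x) with hCdef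
  have ha_le : ∀ k, a k ≤ C * lam ^ k := by
    intro k
    have : a k ≤ ∑ x : R, ∑ y : R, (μ (x : X) / Z) * (lam ^ k * (μstar y / μstar x)) := by
      rw [hadef]
      refine Finset.sum_le_sum fun x _ => Finset.sum_le_sum fun y _ => ?_
      rw [hmuR]
      exact mul_le_mul_of_nonneg_left (hpowB k x y) (div_nonneg (hμ_pos _).le hZpos.le)
    refine le_trans this (le_of_eq ?_)
    rw [hCdef, Finset.sum_mul]
    refine Finset.sum_congr rfl fun x _ => ?_
    rw [Finset.sum_mul]
    exact Finset.sum_congr rfl fun y _ => by ring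
  have hsummable : Summable a := by
    refine Summable.of_nonneg_of_le ha_nonneg ha_le ?_
    exact ((summable_geometric_of_lt_one hlam0 hlam1).mul_left C)
  have ha0 : a 0 = 1 := by
    simp only [hadef]
    have e : ∀ x : R, ∑ y : R, muR μ R (x : X) * ((A ^ 0) x y) = μ (x : X) / Z := by
      intro x
      rw [pow_zero]
      simp [Matrix.one_apply, mul_ite, Finset.sum_ite_eq, hmuR]
    rw [Finset.sum_congr rfl fun x _ => e x, ← Finset.sum_div, Finset.sum_coe_sort R μ, ← hZdef,
      div_self hZpos.ne']
  set S : ℝ := ∑' k, a k with hSdef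
  have hS1 : 1 ≤ S := by
    rw [hSdef, ← ha0]
    exact hsummable.le_tsum 0 fun j _ => ha_nonneg j
  have hSpos : 0 < S := lt_of_lt_of_le one_pos hS1

  -- row sums of powers and the resolvent vector
  set srow : ℕ → R → ℝ := fun k x => ∑ y : R, (A ^ k) x y with hsrowdef
  have hsrow_nonneg : ∀ k x, 0 ≤ srow k x := fun k x => Finset.sum_nonneg fun y _ => hpow0 k x y
  have hsrow_le : ∀ k x, srow k x ≤ lam ^ k * ∑ y : R, (μstar y / μstar x) := by
    intro k x
    rw [Finset.mul_sum]
    exact Finset.sum_le_sum fun y _ => hpowB k x y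
  have hsrow_summ : ∀ x, Summable fun k => srow k x := by
    intro x
    refine Summable.of_nonneg_of_le (fun k => hsrow_nonneg k x) (fun k => hsrow_le k x) ?_
    exact (summable_geometric_of_lt_one hlam0 hlam1).mul_right _
  have hsrow0 : ∀ x, srow 0 x = 1 := by
    intro x
    simp only [hsrowdef, pow_zero]
    simp [Matrix.one_apply]
  have hsrow_rec : ∀ k x, srow (k + 1) x = ∑ y : R, A x y * srow k y := by
    intro k x
    simp only [hsrowdef]
    rw [pow_succ']
    rw [Finset.sum_congr rfl fun y (_ : y ∈ Finset.univ) => (Matrix.mul_apply (M := A) (N := A ^ k))]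
    rw [Finset.sum_comm]
    exact Finset.sum_congr rfl fun z _ => (Finset.mul_sum _ _ _).symm
  set v : R → ℝ := fun x => ∑' k, srow k x with hvdef
  have hv_nonneg : ∀ x, 0 ≤ v x := fun x => tsum_nonneg fun k => hsrow_nonneg k x
  have hveq : ∀ x : R, ∑ y : R, A x y * v y = v x - 1 := by
    intro x
    have e1 : ∀ y : R, A x y * v y = ∑' k, A x y * srow k y := by
      intro y
      simp only [hvdef]
      exact (tsum_mul_left).symm
    rw [Finset.sum_congr rfl fun y _ => e1 y,
      ← Summable.tsum_finsetSum fun y _ => (hsrow_summ y).mul_left (A x y),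
      tsum_congr fun k => (hsrow_rec k x).symm]
    have hz := (hsrow_summ x).tsum_eq_zero_add
    rw [hsrow0 x] at hz
    have hv : v x = ∑' k, srow k x := rfl
    rw [hv, hz]
    ring
  have hμs : ∀ k, ∑ x : R, μ (x : X) * srow k x = Z * a k := by
    intro k
    have e : a k = ∑ x : R, (μ (x : X) / Z) * srow k x := by
      simp only [hadef, hsrowdef]
      refine Finset.sum_congr rfl fun x _ => ?_
      rw [hmuR, Finset.mul_sum]
    rw [e, Finset.mul_sum]
    refine Finset.sum_congr rfl fun x _ => ?_
    field_simp
  have hMveq : ∑ x : R, μ (x : X) * v x = Z * S := by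
    have e1 : ∀ x : R, μ (x : X) * v x = ∑' k, μ (x : X) * srow k x := by
      intro x
      simp only [hvdef]
      exact (tsum_mul_left).symm
    rw [Finset.sum_congr rfl fun x _ => e1 x,
      ← Summable.tsum_finsetSum fun x _ => (hsrow_summ x).mul_left _,
      tsum_congr hμs, tsum_mul_left, hSdef]

  have hsumZ : ∑ x : R, μ (x : X) = Z := by
    rw [Finset.sum_coe_sort R μ, hZdef]
  have hQv1 : ∑ x : R, ∑ y : R, μ (x : X) * A x y * v y
      = (∑ x : R, μ (x : X) * v x) - Z := by
    have e : ∀ x : R, ∑ y : R, μ (x : X) * A x y * v y = μ (x : X) * v x - μ (x : X) := by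
      intro x
      rw [Finset.sum_congr rfl fun y (_ : y ∈ Finset.univ) =>
        (by ring : μ (x : X) * A x y * v y = μ (x : X) * (A x y * v y)),
        ← Finset.mul_sum, hveq x]
      ring
    rw [Finset.sum_congr rfl fun x _ => e x, Finset.sum_sub_distrib, hsumZ]
  have hQsym1 : ∑ x : R, ∑ y : R, μ (x : X) * A x y * v x
      = ∑ x : R, ∑ y : R, μ (x : X) * A x y * v y := by
    rw [Finset.sum_comm]
    exact Finset.sum_congr rfl fun o _ => Finset.sum_congr rfl fun i _ => by
      linear_combination v i * hArev i o
  have hQvv : ∑ x : R, ∑ y : R, μ (x : X) * A x y * v x * v y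
      = (∑ x : R, μ (x : X) * v x ^ 2) - ∑ x : R, μ (x : X) * v x := by
    have e : ∀ x : R, ∑ y : R, μ (x : X) * A x y * v x * v y
        = μ (x : X) * v x ^ 2 - μ (x : X) * v x := by
      intro x
      rw [Finset.sum_congr rfl fun y (_ : y ∈ Finset.univ) =>
        (by ring : μ (x : X) * A x y * v x * v y = (μ (x : X) * v x) * (A x y * v y)),
        ← Finset.mul_sum, hveq x]
      ring
    rw [Finset.sum_congr rfl fun x _ => e x, Finset.sum_sub_distrib]
  -- the quadratic positivity
  have hquad : ∀ t : ℝ, 0 ≤ (Z - ∑ x : R, ∑ y : R, μ (x : X) * A x y) * t ^ 2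
      + 2 * Z * t + Z * S := by
    intro t
    have h1 := hRay (fun x => t + v x)
    have hM2 : 0 ≤ ∑ x : R, μ (x : X) * (t + v x) ^ 2 :=
      Finset.sum_nonneg fun x _ => mul_nonneg (hμ_pos _).le (sq_nonneg _)
    have e1 : ∑ x : R, μ (x : X) * (t + v x) ^ 2
        = Z * t ^ 2 + 2 * t * (∑ x : R, μ (x : X) * v x) + ∑ x : R, μ (x : X) * v x ^ 2 := by
      rw [Finset.sum_congr rfl fun (x : {x // x ∈ R}) (_ : x ∈ Finset.univ) =>
          (by ring : μ (x : X) * (t + v x) ^ 2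
            = μ (x : X) * t ^ 2 + (μ (x : X) * v x) * (2 * t) + μ (x : X) * v x ^ 2),
        Finset.sum_add_distrib, Finset.sum_add_distrib, ← Finset.sum_mul, ← Finset.sum_mul,
        hsumZ]
      ring
    have einner : ∀ x : R, ∑ y : R, μ (x : X) * A x y * (t + v x) * (t + v y)
        = (μ (x : X) * (t + v x)) * (t * (∑ y : R, A x y) + (v x - 1)) := by
      intro x
      have hrow : ∑ y : R, A x y * (t + v y) = t * (∑ y : R, A x y) + (v x - 1) := by
        rw [Finset.sum_congr rfl fun y (_ : y ∈ Finset.univ) =>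
            (by ring : A x y * (t + v y) = A x y * t + A x y * v y),
          Finset.sum_add_distrib, ← Finset.sum_mul, hveq x]
        ring
      rw [Finset.sum_congr rfl fun y (_ : y ∈ Finset.univ) =>
          (by ring : μ (x : X) * A x y * (t + v x) * (t + v y)
            = (μ (x : X) * (t + v x)) * (A x y * (t + v y))),
        ← Finset.mul_sum, hrow]
    have d1 : ∑ x : R, ∑ y : R, μ (x : X) * A x y * (t + v x) * (t + v y)
        = t ^ 2 * (∑ x : R, ∑ y : R, μ (x : X) * A x y)
          + t * ((∑ x : R, μ (x : X) * v x) - Z)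
          + t * (∑ x : R, ∑ y : R, μ (x : X) * A x y * v x)
          + ((∑ x : R, μ (x : X) * v x ^ 2) - ∑ x : R, μ (x : X) * v x) := by
      rw [Finset.sum_congr rfl fun x _ => einner x]
      have expand : ∀ x : R, (μ (x : X) * (t + v x)) * (t * (∑ y : R, A x y) + (v x - 1))
          = (∑ y : R, μ (x : X) * A x y) * t ^ 2
            + (μ (x : X) * v x - μ (x : X)) * t
            + (∑ y : R, μ (x : X) * A x y * v x) * t
            + (μ (x : X) * v x ^ 2 - μ (x : X) * v x) := by
        intro x
        have r1 : ∑ y : R, μ (x : X) * A x y = μ (x : X) * ∑ y : R, A x y :=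
          (Finset.mul_sum _ _ _).symm
        have r2 : ∑ y : R, μ (x : X) * A x y * v x = (μ (x : X) * v x) * ∑ y : R, A x y := by
          rw [Finset.mul_sum]
          exact Finset.sum_congr rfl fun y _ => by ring
        rw [r1, r2]
        ring
      rw [Finset.sum_congr rfl fun x _ => expand x, Finset.sum_add_distrib,
        Finset.sum_add_distrib, Finset.sum_add_distrib, ← Finset.sum_mul, ← Finset.sum_mul,
        ← Finset.sum_mul, Finset.sum_sub_distrib, Finset.sum_sub_distrib, hsumZ]
      ring
    rw [e1, d1, hQsym1, hQv1] at h1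
    have hM2' := hM2
    rw [e1] at hM2'
    have hprod : 0 ≤ (1 - lam) * (Z * t ^ 2 + 2 * t * (∑ x : R, μ (x : X) * v x)
        + ∑ x : R, μ (x : X) * v x ^ 2) := mul_nonneg (by linarith) hM2'
    nlinarith [h1, hprod, hMveq]
  -- conclusion 4 : 1/S ≤ φ_R
  have hB11 : Z - (∑ x : R, ∑ y : R, μ (x : X) * A x y)
      = Z * ∑ x : R, muR μ R (x : X) * escR p R (x : X) := by
    have hesc : ∀ x : R, escR p R (x : X) = 1 - ∑ y : R, A x y := by
      intro x
      have hsplit : (∑ y ∈ R, p (x : X) y) + ∑ y ∈ Rᶜ, p (x : X) y = ∑ y, p (x : X) y :=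
        Finset.sum_add_sum_compl R _
      rw [hp_row] at hsplit
      have : ∑ y : R, A x y = ∑ y ∈ R, p (x : X) y := by
        rw [Finset.sum_congr rfl fun y (_ : y ∈ Finset.univ) => hAdef x y]
        exact Finset.sum_coe_sort R fun y => p (x : X) y
      rw [escR, this]
      linarith
    rw [Finset.mul_sum]
    rw [Finset.sum_congr rfl fun (x : {x // x ∈ R}) (_ : x ∈ Finset.univ) => (by
      rw [hmuR, hesc x]
      field_simp : Z * (muR μ R (x : X) * escR p R (x : X)) = μ (x : X) * (1 - ∑ y : R, A x y))]
    rw [Finset.sum_congr rfl fun (x : {x // x ∈ R}) (_ : x ∈ Finset.univ) => (by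
      rw [mul_sub, mul_one, Finset.mul_sum] : μ (x : X) * (1 - ∑ y : R, A x y)
        = μ (x : X) - ∑ y : R, μ (x : X) * A x y)]
    rw [Finset.sum_sub_distrib, hsumZ]
  have hCS : Z ^ 2 ≤ (Z - ∑ x : R, ∑ y : R, μ (x : X) * A x y) * (Z * S) :=
    cs_quad _ _ _ hquad
  have hfin4 : 1 ≤ (∑ x : R, muR μ R (x : X) * escR p R (x : X)) * S := by
    rw [hB11] at hCS
    have hZ2 : 0 < Z ^ 2 := by positivity
    nlinarith [hCS]
  -- conclusion 3 : φstar ≤ 1/S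
  have hRayv := hRay v
  have hcsv : (∑ x : R, μ (x : X) * v x) ^ 2
      ≤ Z * ∑ x : R, μ (x : X) * v x ^ 2 := by
    have := cs_weighted Finset.univ (fun x : R => μ (x : X)) (fun _ => 1) v
      (fun x _ => (hμ_pos _).le)
    simp only [mul_one, one_pow] at this
    rw [hsumZ] at this
    exact this
  have hfin3 : φstar * S ≤ 1 := by
    have hbvv : Z * S = (∑ x : R, μ (x : X) * v x ^ 2)
        - ∑ x : R, ∑ y : R, μ (x : X) * A x y * v x * v y := by
      rw [hQvv, hMveq]
      ring
    -- Z*S ≥ φstar * Mvv  and Mvv ≥ Z*S^2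
    have h1 : φstar * (∑ x : R, μ (x : X) * v x ^ 2) ≤ Z * S := by
      rw [hbvv]
      have := hRayv
      rw [hlamdef] at this
      linarith
    have h2 : Z * S ^ 2 ≤ ∑ x : R, μ (x : X) * v x ^ 2 := by
      rw [hMveq] at hcsv
      nlinarith [hcsv]
    nlinarith [h1, h2, mul_pos hZpos hSpos]

  -- Part 1 : Dirichlet identity for functions supported on R
  have hrestrict : ∀ f : X → ℝ, (∀ x ∉ R, f x = 0) →
      ∑ x, μ x * f x ^ 2 = ∑ x : R, μ (x : X) * f (x : X) ^ 2 := by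
    intro f hf
    rw [Finset.sum_coe_sort R (fun z => μ z * f z ^ 2)]
    exact (Finset.sum_subset (Finset.subset_univ R) fun x _ hx => by
      rw [hf x hx]; ring).symm
  have hdirichlet : ∀ f : X → ℝ, (∀ x ∉ R, f x = 0) →
      dirOf p μ f = (∑ x, μ x * f x ^ 2)
        - ∑ x : R, ∑ y : R, μ (x : X) * A x y * f (x : X) * f (y : X) := by
    intro f hf
    have e1 : ∑ x, ∑ y, μ x * p x y * f x ^ 2 = ∑ x, μ x * f x ^ 2 := by
      refine Finset.sum_congr rfl fun x _ => ?_
      rw [Finset.sum_congr rfl fun y (_ : y ∈ Finset.univ) =>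
          (by ring : μ x * p x y * f x ^ 2 = (μ x * f x ^ 2) * p x y),
        ← Finset.mul_sum, hp_row, mul_one]
    have e2 : ∑ x, ∑ y, μ x * p x y * f y ^ 2 = ∑ x, μ x * f x ^ 2 := by
      rw [Finset.sum_comm]
      refine Finset.sum_congr rfl fun y _ => ?_
      rw [Finset.sum_congr rfl fun x (_ : x ∈ Finset.univ) =>
          (by linear_combination f y ^ 2 * hrev x y :
            μ x * p x y * f y ^ 2 = (μ y * f y ^ 2) * p y x),
        ← Finset.mul_sum, hp_row, mul_one]
    have e3 : ∑ x : R, ∑ y : R, μ (x : X) * A x y * f (x : X) * f (y : X)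
        = ∑ x, ∑ y, μ x * p x y * f x * f y := by
      have inner : ∀ z : X, z ∈ R → ∑ y : R, μ z * p z (y : X) * f z * f (y : X)
          = ∑ y, μ z * p z y * f z * f y := by
        intro z _
        rw [Finset.sum_coe_sort R (fun y => μ z * p z y * f z * f y)]
        exact Finset.sum_subset (Finset.subset_univ R) fun y _ hy => by
          rw [hf y hy]; ring
      calc ∑ x : R, ∑ y : R, μ (x : X) * A x y * f (x : X) * f (y : X)
          = ∑ x : R, ∑ y : R, μ (x : X) * p (x : X) (y : X) * f (x : X) * f (y : X) := by
            refine Finset.sum_congr rfl fun x _ => Finset.sum_congr rfl fun y _ => ?_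
            rw [hAdef]
        _ = ∑ x ∈ R, ∑ y : R, μ x * p x (y : X) * f x * f (y : X) :=
            Finset.sum_coe_sort R (fun z => ∑ y : R, μ z * p z (y : X) * f z * f (y : X))
        _ = ∑ x ∈ R, ∑ y, μ x * p x y * f x * f y :=
            Finset.sum_congr rfl inner
        _ = ∑ x, ∑ y, μ x * p x y * f x * f y := by
            exact Finset.sum_subset (Finset.subset_univ R) fun x _ hx =>
              Finset.sum_eq_zero fun y _ => by rw [hf x hx]; ring
    have eE : ∑ x, ∑ y, μ x * p x y * (f x - f y) ^ 2
        = (∑ x, ∑ y, μ x * p x y * f x ^ 2) + (∑ x, ∑ y, μ x * p x y * f y ^ 2)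
          - 2 * ∑ x, ∑ y, μ x * p x y * f x * f y := by
      have einner : ∀ x : X, ∑ y, μ x * p x y * (f x - f y) ^ 2
          = (∑ y, μ x * p x y * f x ^ 2) + (∑ y, μ x * p x y * f y ^ 2)
            - (∑ y, μ x * p x y * f x * f y) * 2 := by
        intro x
        have hfac : ∑ y, μ x * p x y * f x * f y * 2 = (∑ y, μ x * p x y * f x * f y) * 2 :=
          (Finset.sum_mul _ _ _).symm
        rw [Finset.sum_congr rfl fun y (_ : y ∈ Finset.univ) =>
            (by ring : μ x * p x y * (f x - f y) ^ 2
              = (μ x * p x y * f x ^ 2 + μ x * p x y * f y ^ 2)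
                - μ x * p x y * f x * f y * 2),
          Finset.sum_sub_distrib, Finset.sum_add_distrib, hfac]
      have hfac2 : ∑ x, (∑ y, μ x * p x y * f x * f y) * 2
          = (∑ x, ∑ y, μ x * p x y * f x * f y) * 2 := (Finset.sum_mul _ _ _).symm
      rw [Finset.sum_congr rfl fun x _ => einner x, Finset.sum_sub_distrib,
        Finset.sum_add_distrib, hfac2]
      ring
    rw [dirOf, eE, e1, e2, e3]
    ring
  -- the variational set
  have hlow : ∀ r ∈ {r : ℝ | ∃ f : X → ℝ, f ≠ 0 ∧ (∀ x ∉ R, f x = 0) ∧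
      r = dirOf p μ f / ∑ x, μ x * f x ^ 2}, φstar ≤ r := by
    rintro r ⟨f, hfne, hf, rfl⟩
    have hx0 : ∃ x, f x ≠ 0 := by
      by_contra hc
      push_neg at hc
      exact hfne (funext hc)
    obtain ⟨x0, hx0⟩ := hx0
    have hden : 0 < ∑ x, μ x * f x ^ 2 := by
      refine Finset.sum_pos' (fun x _ => mul_nonneg (hμ_pos x).le (sq_nonneg _)) ⟨x0,
        Finset.mem_univ x0, ?_⟩
      exact mul_pos (hμ_pos x0) (lt_of_le_of_ne (sq_nonneg _) (Ne.symm (pow_ne_zero 2 hx0)))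
    have hr := hRay (fun x : R => f (x : X))
    try simp only at hr
    rw [hlamdef] at hr
    have hres := hrestrict f hf
    rw [le_div_iff₀ hden, hdirichlet f hf, hres]
    nlinarith [hr]
  have hmem : φstar ∈ {r : ℝ | ∃ f : X → ℝ, f ≠ 0 ∧ (∀ x ∉ R, f x = 0) ∧
      r = dirOf p μ f / ∑ x, μ x * f x ^ 2} := by
    classical
    refine ⟨fun x => if hx : x ∈ R then μstar ⟨x, hx⟩ / μ x else 0, ?_, ?_, ?_⟩
    · obtain ⟨x0, hx0⟩ := hR_ne
      intro hc
      have := congrFun hc x0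
      rw [dif_pos hx0] at this
      have hpos : 0 < μstar ⟨x0, hx0⟩ / μ x0 := div_pos (hμstar_pos _) (hμ_pos _)
      simp only [Pi.zero_apply] at this
      linarith
    · intro x hx
      exact dif_neg hx
    · have hf : ∀ x ∉ R, (fun x => if hx : x ∈ R then μstar ⟨x, hx⟩ / μ x else 0) x = 0 :=
        fun x hx => dif_neg hx
      have hsub : ∀ x : R, (fun z => if hz : z ∈ R then μstar ⟨z, hz⟩ / μ z else 0) (x : X)
          = h x := by
        intro x
        simp only [hhdef]
        rw [dif_pos x.2]
      have hres := hrestrict _ hf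
      have hDh : 0 < ∑ x : R, μ (x : X) * h x ^ 2 := by
        obtain ⟨x0, hx0⟩ := hR_ne
        have : Nonempty {x // x ∈ R} := ⟨⟨x0, hx0⟩⟩
        refine Finset.sum_pos (fun x _ => mul_pos (hμ_pos _) (pow_pos (hhpos x) 2)) ?_
        exact Finset.univ_nonempty
      have hQh : ∑ x : R, ∑ y : R, μ (x : X) * A x y * h x * h y
          = lam * ∑ x : R, μ (x : X) * h x ^ 2 := by
        have e : ∀ x : R, ∑ y : R, μ (x : X) * A x y * h x * h y
            = (μ (x : X) * h x) * (lam * h x) := by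
          intro x
          rw [Finset.sum_congr rfl fun y (_ : y ∈ Finset.univ) =>
              (by ring : μ (x : X) * A x y * h x * h y
                = (μ (x : X) * h x) * (A x y * h y)),
            ← Finset.mul_sum, heig x]
        rw [Finset.sum_congr rfl fun x _ => e x, Finset.mul_sum]
        exact Finset.sum_congr rfl fun x _ => by ring
      rw [hdirichlet _ hf, hres]
      rw [Finset.sum_congr rfl fun (x : {z // z ∈ R}) (_ : x ∈ Finset.univ) => (by
        rw [hsub x] : μ (x : X)
            * ((fun z => if hz : z ∈ R then μstar ⟨z, hz⟩ / μ z else 0) (x : X)) ^ 2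
          = μ (x : X) * h x ^ 2)]
      rw [Finset.sum_congr rfl fun (x : {z // z ∈ R}) (_ : x ∈ Finset.univ) =>
        Finset.sum_congr rfl fun (y : {z // z ∈ R}) (_ : y ∈ Finset.univ) => (by
          rw [hsub x, hsub y] : μ (x : X) * A x y
              * ((fun z => if hz : z ∈ R then μstar ⟨z, hz⟩ / μ z else 0) (x : X))
              * ((fun z => if hz : z ∈ R then μstar ⟨z, hz⟩ / μ z else 0) (y : X))
            = μ (x : X) * A x y * h x * h y)]
      rw [hQh, eq_div_iff hDh.ne', hlamdef]
      ring
  refine ⟨?_, ?_, ?_, ?_⟩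
  · exact le_antisymm (le_csInf ⟨φstar, hmem⟩ hlow)
      (csInf_le ⟨φstar, fun r hr => hlow r hr⟩ hmem)
  · exact hsummable
  · have h3 : φstar ≤ 1 / S := by
      rw [le_div_iff₀ hSpos]
      exact hfin3
    exact h3
  · have h4 : 1 / S ≤ ∑ x : R, muR μ R (x : X) * escR p R (x : X) := by
      rw [div_le_iff₀ hSpos]
      linarith [hfin4]
    exact h4
end
end
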